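/- Let Γ be a finitely generated group with a normal subgroup V isomorphic to ℤ^r (free abelian of rank r) such that the quotient Γ/V is cyclic, generated by the image of an element t ∈ Γ, and suppose the automorphism of V given by conjugation by t, written as a matrix A ∈ GL(r, ℤ) via the isomorphism V ≅ ℤ^r, has a complex eigenvalue λ with |λ| ≥ 2. Then Γ has uniform exponential growth. -/

import Mathlib

open Subgroup

/-- The ball of radius `n`: elements expressible as a product of at most `n`
elements of `S ∪ S⁻¹`. -/
def ball {G : Type*} [Group G] (S : Finset G) (n : ℕ) : Set G :=
  {g | ∃ l : List G, l.length ≤ n ∧ (∀ x ∈ l, x ∈ S ∨ x⁻¹ ∈ S) ∧ l.prod = g}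

/-- The growth rate `β(S,Γ) = inf_{n ≥ 1} β_n(S,Γ)^(1/n)`. -/
noncomputable def growthRate {G : Type*} [Group G] (S : Finset G) : ℝ :=
  ⨅ n : ℕ, (Nat.card (ball S (n + 1)) : ℝ) ^ (((n : ℝ) + 1)⁻¹)

/-- Word length with respect to `S`. -/
noncomputable def wordLength {G : Type*} [Group G] (S : Finset G) (g : G) : ℕ :=
  sInf {n : ℕ | g ∈ ball S n}

/-- `a` and `b` generate a free semigroup. -/
def GeneratesFreeSemigroup {G : Type*} [Group G] (a b : G) : Prop :=
  Function.Injective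
    (FreeSemigroup.lift (fun x : Bool => if x then a else b) : FreeSemigroup Bool →ₙ* G)

/-- `β(G) = inf_S β(S,G)` over all finite generating sets. -/
noncomputable def groupGrowthRate (G : Type*) [Group G] : ℝ :=
  sInf {r : ℝ | ∃ S : Finset G, Subgroup.closure (S : Set G) = ⊤ ∧ r = growthRate S}

/-- Uniform exponential growth: `inf_S β(S,G) > 1`. -/
def UniformExponentialGrowth (G : Type*) [Group G] : Prop :=
  1 < groupGrowthRate G

/-- Exponential growth: `β(S,G) > 1` for some finite generating set. -/
def ExponentialGrowth (G : Type*) [Group G] : Prop :=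
  ∃ S : Finset G, Subgroup.closure (S : Set G) = ⊤ ∧ 1 < growthRate S

/-- Polynomial growth. -/
def PolynomialGrowth (G : Type*) [Group G] : Prop :=
  ∃ (S : Finset G) (C : ℝ) (d : ℕ), Subgroup.closure (S : Set G) = ⊤ ∧
    ∀ n : ℕ, 1 ≤ n → (Nat.card (ball S n) : ℝ) ≤ C * (n : ℝ) ^ d

section BallLemmas
variable {G : Type*} [Group G] (S : Finset G)

lemma one_mem_ball (n : ℕ) : (1 : G) ∈ ball S n :=
  ⟨[], by simp⟩

lemma ball_mono {m n : ℕ} (h : m ≤ n) : ball S m ⊆ ball S n := by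
  rintro g ⟨l, hl, hx, hp⟩
  exact ⟨l, hl.trans h, hx, hp⟩

lemma mem_ball_of_mem {s : G} (hs : s ∈ S) : s ∈ ball S 1 :=
  ⟨[s], by simp [hs]⟩

lemma inv_mem_ball_of_mem {s : G} (hs : s ∈ S) : s⁻¹ ∈ ball S 1 :=
  ⟨[s⁻¹], by simp [hs]⟩

lemma mul_mem_ball {a b : G} {m n : ℕ} (ha : a ∈ ball S m) (hb : b ∈ ball S n) :
    a * b ∈ ball S (m + n) := by
  obtain ⟨l, hl, hx, hp⟩ := ha
  obtain ⟨l', hl', hx', hp'⟩ := hb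
  refine ⟨l ++ l', ?_, ?_, by simp [hp, hp']⟩
  · simpa using Nat.add_le_add hl hl'
  · intro x hx''
    rcases List.mem_append.1 hx'' with h | h
    · exact hx x h
    · exact hx' x h

lemma prod_mem_ball {k : ℕ} {l : List G} (h : ∀ x ∈ l, x ∈ ball S k) :
    l.prod ∈ ball S (k * l.length) := by
  induction l with
  | nil => simpa using one_mem_ball S 0
  | cons a l ih =>
    have : a * l.prod ∈ ball S (k + k * l.length) :=
      mul_mem_ball S (h a (by simp)) (ih fun x hx => h x (List.mem_cons_of_mem _ hx))
    simpa [List.length_cons, Nat.mul_succ, Nat.add_comm] using this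

lemma ball_finite (n : ℕ) : (ball S n).Finite := by
  induction n with
  | zero =>
    refine Set.Finite.subset (Set.finite_singleton 1) ?_
    rintro g ⟨l, hl, -, hp⟩
    interval_cases h : l.length
    · simp [List.length_eq_zero_iff.1 h] at hp; simp [← hp]
  | succ n ih =>
    have : ball S (n+1) ⊆ insert (1:G) (Set.image2 (· * ·)
        ((S : Set G) ∪ (fun x => x⁻¹) '' (S : Set G)) (ball S n)) := by
      rintro g ⟨l, hl, hx, hp⟩
      cases l with
      | nil => left; simp [← hp]
      | cons a l' =>
        right
        refine ⟨a, ?_, l'.prod, ⟨l', by simpa using hl, fun x hx' => hx x (by simp [hx']), rfl⟩,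
          by simp [← hp]⟩
        rcases hx a (by simp) with h | h
        · exact Or.inl h
        · exact Or.inr ⟨a⁻¹, h, by simp⟩
    exact Set.Finite.subset (Set.Finite.insert 1 (Set.Finite.image2 _
      (Set.Finite.union S.finite_toSet (Set.Finite.image _ S.finite_toSet)) ih)) this

end BallLemmas

lemma digits_zero {μ : ℂ} (hμ : 2 ≤ ‖μ‖) :
    ∀ (m : ℕ) (d : ℕ → ℂ), (∀ i, d i = 0 ∨ ‖d i‖ = 1) →
      (∑ i ∈ Finset.range m, d i * μ ^ i) = 0 → ∀ i < m, d i = 0 := by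
  have geom : ∀ m : ℕ, (∑ i ∈ Finset.range m, ‖μ‖ ^ i) ≤ ‖μ‖ ^ m - 1 := by
    intro m
    induction m with
    | zero => simp
    | succ m ih =>
      rw [Finset.sum_range_succ, pow_succ]
      nlinarith [pow_nonneg (by positivity : (0:ℝ) ≤ ‖μ‖) m]
  intro m
  induction m with
  | zero => intro d _ _ i hi; omega
  | succ m ih =>
    intro d hd hsum i hi
    rw [Finset.sum_range_succ] at hsum
    rcases hd m with h0 | h1
    · rcases Nat.lt_succ_iff_lt_or_eq.1 hi with h | h
      · exact ih d hd (by simpa [h0] using hsum) i h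
      · exact h ▸ h0
    · exfalso
      have heq : ‖d m * μ ^ m‖ = ‖∑ i ∈ Finset.range m, d i * μ ^ i‖ := by
        rw [show d m * μ ^ m = -(∑ i ∈ Finset.range m, d i * μ ^ i) by linear_combination hsum]
        simp
      have hub : ‖∑ i ∈ Finset.range m, d i * μ ^ i‖ ≤ ‖μ‖ ^ m - 1 := by
        refine le_trans (le_trans (norm_sum_le ..) ?_) (geom m)
        refine Finset.sum_le_sum fun i _ => ?_
        rw [norm_mul, norm_pow]
        rcases hd i with h | h
        · simp [h]
        · simp [h]
      have hlb : ‖d m * μ ^ m‖ = ‖μ‖ ^ m := by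
        rw [norm_mul, h1, one_mul, norm_pow]
      rw [hlb] at heq
      linarith [heq ▸ hub]

section Words
variable {G : Type*} [Group G] (V : Subgroup G) [hVn : V.Normal] (Ψ : G → ℂ)
  (s v : G) (μ : ℂ)

def wprod (l : List Bool) : G := (l.map (fun b => (if b then v else 1) * s)).prod

def wV (l : List Bool) : G := wprod s v l * (s ^ l.length)⁻¹

def wval (μ : ℂ) (l : List Bool) : ℂ :=
  l.foldr (fun b acc => (if b then (1:ℂ) else 0) + μ * acc) 0

variable (hv : v ∈ V)
  (hmul : ∀ a ∈ V, ∀ b ∈ V, Ψ (a * b) = Ψ a + Ψ b)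
  (hconj : ∀ w ∈ V, Ψ (s * w * s⁻¹) = μ * Ψ w)

lemma wV_cons (b : Bool) (l : List Bool) :
    wV s v (b :: l) = (if b then v else 1) * (s * wV s v l * s⁻¹) := by
  simp only [wV, wprod, List.map_cons, List.prod_cons, List.length_cons]
  group

include hv in
lemma wV_mem (l : List Bool) : wV s v l ∈ V := by
  induction l with
  | nil => simpa [wV, wprod] using V.one_mem
  | cons b l ih =>
    rw [wV_cons]
    exact V.mul_mem (by cases b <;> simp [hv, V.one_mem]) (hVn.conj_mem _ ih s)

omit hVn in
include hmul in
lemma psi_one : Ψ 1 = 0 := by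
  simpa using hmul 1 V.one_mem 1 V.one_mem

include hv hmul hconj in
lemma psi_wV (l : List Bool) : Ψ (wV s v l) = wval μ l * Ψ v := by
  induction l with
  | nil =>
    simpa [wV, wprod, wval] using psi_one V Ψ hmul
  | cons b l ih =>
    rw [wV_cons, wval]
    have hmem : s * wV s v l * s⁻¹ ∈ V := hVn.conj_mem _ (wV_mem V s v hv l) s
    have h1 : Ψ ((if b then v else 1) * (s * wV s v l * s⁻¹)) =
        Ψ (if b then v else 1) + Ψ (s * wV s v l * s⁻¹) :=
      hmul _ (by cases b <;> simp [hv, V.one_mem]) _ hmem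
    rw [h1, hconj _ (wV_mem V s v hv l), ih]
    cases b <;> simp [psi_one V Ψ hmul, wval] <;> ring

lemma wval_eq_sum (l : List Bool) :
    wval μ l = ∑ i ∈ Finset.range l.length,
      (if l.getD i false then (1:ℂ) else 0) * μ ^ i := by
  induction l with
  | nil => simp [wval]
  | cons b l ih =>
    rw [wval, List.foldr_cons]
    rw [show (l.foldr (fun b acc => (if b then (1:ℂ) else 0) + μ * acc) 0) = wval μ l from rfl, ih,
      List.length_cons, Finset.sum_range_succ', Finset.mul_sum]
    simp only [List.getD_cons_succ, List.getD_cons_zero, pow_zero, mul_one, pow_succ]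
    rw [add_comm]
    congr 1
    exact Finset.sum_congr rfl fun i _ => by ring

include hv hmul hconj in
lemma wprod_injective (hμ : 2 ≤ ‖μ‖) (hΨv : Ψ v ≠ 0) (m : ℕ) :
    Function.Injective (fun f : Fin m → Bool => wprod s v (List.ofFn f)) := by
  intro f f' hff
  simp only at hff
  have hlen : (List.ofFn f).length = m := List.length_ofFn
  have hlen' : (List.ofFn f').length = m := List.length_ofFn
  have hW : wV s v (List.ofFn f) = wV s v (List.ofFn f') := by
    rw [wV, wV, hff, hlen, hlen']
  have hval : wval μ (List.ofFn f) = wval μ (List.ofFn f') := by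
    have := psi_wV V Ψ s v μ hv hmul hconj (List.ofFn f)
    rw [hW, psi_wV V Ψ s v μ hv hmul hconj (List.ofFn f')] at this
    exact mul_right_cancel₀ hΨv this.symm
  rw [wval_eq_sum, wval_eq_sum, hlen, hlen'] at hval
  set dg : ℕ → ℂ := fun i =>
    (if (List.ofFn f).getD i false then (1:ℂ) else 0) -
    (if (List.ofFn f').getD i false then (1:ℂ) else 0) with hdg
  have hsum : ∑ i ∈ Finset.range m, dg i * μ ^ i = 0 := by
    simp only [hdg, sub_mul, Finset.sum_sub_distrib]
    rw [hval]; ring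
  have hd : ∀ i, dg i = 0 ∨ ‖dg i‖ = 1 := by
    intro i
    simp only [hdg]
    rcases (List.ofFn f).getD i false <;> rcases (List.ofFn f').getD i false <;> simp
  have hz := digits_zero hμ m dg hd hsum
  funext i
  have h2 := hz i i.2
  simp only [hdg, sub_eq_zero] at h2
  have hgf : (List.ofFn f).getD i false = f i := by
    rw [List.getD_eq_getElem _ _ (by rw [hlen]; exact i.2), List.getElem_ofFn]
  have hgf' : (List.ofFn f').getD i false = f' i := by
    rw [List.getD_eq_getElem _ _ (by rw [hlen']; exact i.2), List.getElem_ofFn]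
  rw [hgf, hgf'] at h2
  rcases hb : f i <;> rcases hb' : f' i <;> rw [hb, hb'] at h2 <;> simp_all

end Words

lemma growth_bound {G : Type*} [Group G] (V : Subgroup G) [hVn : V.Normal] (Ψ : G → ℂ)
    (lam : ℂ) (t : G)
    (hlam : 2 ≤ ‖lam‖)
    (hmul : ∀ a ∈ V, ∀ b ∈ V, Ψ (a * b) = Ψ a + Ψ b)
    (hconjg : ∀ g : G, ∃ d : ℤ, (g ∉ V → d ≠ 0) ∧ ∀ w ∈ V, Ψ (g * w * g⁻¹) = lam ^ d * Ψ w)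
    (hconjt : ∀ w ∈ V, Ψ (t * w * t⁻¹) = lam * Ψ w)
    (hcommV : ∀ u u' : G, u⁻¹ * u'⁻¹ * u * u' ∈ V)
    (hVab : ∀ a ∈ V, ∀ b ∈ V, a * b = b * a)
    (v₀ : G) (hv₀ : v₀ ∈ V) (hΨv₀ : Ψ v₀ ≠ 0)
    (S : Finset G) (hS : Subgroup.closure (S : Set G) = ⊤) :
    (2:ℝ) ^ ((10:ℝ)⁻¹) ≤ growthRate S := by
  have hlam0 : lam ≠ 0 := by
    intro h; rw [h] at hlam; norm_num at hlam
  have hlam1 : lam ≠ 1 := by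
    intro h; rw [h] at hlam; norm_num at hlam
  have hΨinv : ∀ a ∈ V, Ψ a⁻¹ = -Ψ a := by
    intro a ha
    have h1 := hmul a ha a⁻¹ (V.inv_mem ha)
    rw [mul_inv_cancel] at h1
    rw [psi_one V Ψ hmul] at h1
    linear_combination -h1
  -- Step A : some generator outside V
  have hSV : ∃ u₀ ∈ S, u₀ ∉ V := by
    by_contra h
    push_neg at h
    have hle : Subgroup.closure (S : Set G) ≤ V := (Subgroup.closure_le V).2 h
    rw [hS] at hle
    have ht : t ∈ V := hle (Subgroup.mem_top t)
    have h1 : t * v₀ * t⁻¹ = v₀ := by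
      rw [hVab t ht v₀ hv₀]; group
    have h2 := hconjt v₀ hv₀
    rw [h1] at h2
    have h3 : (lam - 1) * Ψ v₀ = 0 := by linear_combination -h2
    rcases mul_eq_zero.1 h3 with h | h
    · exact hlam1 (by linear_combination h)
    · exact hΨv₀ h
  obtain ⟨u₀, hu₀S, hu₀V⟩ := hSV
  obtain ⟨d, hdne, hdconj⟩ := hconjg u₀
  have hd0 : d ≠ 0 := hdne hu₀V
  set n := d.natAbs with hn
  have hn0 : n ≠ 0 := by simpa [hn] using hd0
  set μ : ℂ := lam ^ n with hμdef
  have hμ : 2 ≤ ‖μ‖ := by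
    rw [hμdef, norm_pow]
    calc (2:ℝ) ≤ ‖lam‖ := hlam
      _ ≤ ‖lam‖ ^ n := le_self_pow₀ (by linarith) hn0
  -- Step B : a short element with eigenvalue of modulus ≥ 2
  obtain ⟨s, hsball, hsconj⟩ :
      ∃ s : G, s ∈ ball S 1 ∧ ∀ w ∈ V, Ψ (s * w * s⁻¹) = μ * Ψ w := by
    rcases Int.natAbs_eq d with h | h
    · refine ⟨u₀, mem_ball_of_mem S hu₀S, fun w hw => ?_⟩
      rw [hdconj w hw, h, zpow_natCast]
    · refine ⟨u₀⁻¹, inv_mem_ball_of_mem S hu₀S, fun w hw => ?_⟩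
      have hw' : u₀⁻¹ * w * u₀ ∈ V := by
        have := hVn.conj_mem w hw u₀⁻¹
        simpa using this
      have h2 := hdconj _ hw'
      have h3 : u₀ * (u₀⁻¹ * w * u₀) * u₀⁻¹ = w := by group
      rw [h3] at h2
      have h4 : Ψ (u₀⁻¹ * w * u₀) = lam ^ (-d) * Ψ w := by
        rw [h2, ← mul_assoc, ← zpow_add₀ hlam0]
        norm_num
      have h5 : -d = (n : ℤ) := by omega
      rw [inv_inv, h4, h5, zpow_natCast, hμdef]
  -- Step C : a short element of V with nonzero Ψ
  have hcase : ∃ w ∈ ball S 4, w ∈ V ∧ Ψ w ≠ 0 := by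
    by_contra hc
    push_neg at hc
    let K : Subgroup G :=
      { carrier := {g | g ∈ V ∧ Ψ g = 0}
        one_mem' := ⟨V.one_mem, psi_one V Ψ hmul⟩
        mul_mem' := fun {a b} ha hb =>
          ⟨V.mul_mem ha.1 hb.1, by rw [hmul a ha.1 b hb.1, ha.2, hb.2, add_zero]⟩
        inv_mem' := fun {a} ha => ⟨V.inv_mem ha.1, by rw [hΨinv a ha.1, ha.2, neg_zero]⟩ }
    have hKmem : ∀ g : G, g ∈ K ↔ g ∈ V ∧ Ψ g = 0 := fun g => Iff.rfl
    haveI hKn : K.Normal := by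
      constructor
      intro k hk g
      obtain ⟨dg, -, hg⟩ := hconjg g
      exact ⟨hVn.conj_mem k hk.1 g, by rw [hg k hk.1, hk.2, mul_zero]⟩
    let π : G →* G ⧸ K := QuotientGroup.mk' K
    have hπsurj : Function.Surjective π := QuotientGroup.mk'_surjective K
    have hScomm : ∀ a ∈ π '' (S : Set G), ∀ b ∈ π '' (S : Set G), a * b = b * a := by
      rintro a ⟨u, huS, rfl⟩ b ⟨u', hu'S, rfl⟩
      have hcball : (u * u')⁻¹ * (u' * u) ∈ ball S 4 := by
        have heq : (u * u')⁻¹ * (u' * u) = ((u'⁻¹ * u⁻¹) * u') * u := by group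
        rw [heq]
        exact mul_mem_ball S (mul_mem_ball S
          (mul_mem_ball S (inv_mem_ball_of_mem S hu'S) (inv_mem_ball_of_mem S huS))
          (mem_ball_of_mem S hu'S)) (mem_ball_of_mem S huS)
      have hcV : (u * u')⁻¹ * (u' * u) ∈ V := by
        have heq : (u * u')⁻¹ * (u' * u) = u'⁻¹ * u⁻¹ * u' * u := by group
        rw [heq]
        exact hcommV u' u
      have hcK : (u * u')⁻¹ * (u' * u) ∈ K := ⟨hcV, hc _ hcball hcV⟩
      have : π (u * u') = π (u' * u) := (QuotientGroup.eq ).2 hcK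
      simpa [map_mul] using this
    have hTtop : Subgroup.closure (π '' (S : Set G)) = ⊤ := by
      rw [← MonoidHom.map_closure, hS, Subgroup.map_top_of_surjective _ hπsurj]
    have hQab : ∀ a b : G ⧸ K, a * b = b * a := by
      have h1 : Subgroup.closure (π '' (S : Set G)) ≤ Subgroup.centralizer (π '' (S : Set G)) :=
        (Subgroup.closure_le _).2 fun x hx =>
          Subgroup.mem_centralizer_iff.2 fun h hh => hScomm h hh x hx
      have h2 : Subgroup.closure (π '' (S : Set G)) ≤
          Subgroup.centralizer ↑(Subgroup.closure (π '' (S : Set G))) :=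
        (Subgroup.closure_le _).2 fun x hx =>
          Subgroup.mem_centralizer_iff.2 fun h hh =>
            (Subgroup.mem_centralizer_iff.1 (h1 hh) x hx).symm
      intro a b
      have ha : a ∈ Subgroup.closure (π '' (S : Set G)) := hTtop ▸ Subgroup.mem_top a
      have hb : b ∈ Subgroup.closure (π '' (S : Set G)) := hTtop ▸ Subgroup.mem_top b
      exact Subgroup.mem_centralizer_iff.1 (h2 hb) a ha
    have hc1 : t * v₀ * t⁻¹ * v₀⁻¹ ∈ K := by
      have h1 : π (t * v₀ * t⁻¹ * v₀⁻¹) = 1 := by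
        have hcomm := hQab (π t) (π v₀)
        rw [map_mul, map_mul, map_mul, map_inv, map_inv, hcomm]
        group
      exact (QuotientGroup.eq_one_iff _).1 h1
    have hV1 : t * v₀ * t⁻¹ ∈ V := hVn.conj_mem v₀ hv₀ t
    have e1 : Ψ (t * v₀ * t⁻¹ * v₀⁻¹) = lam * Ψ v₀ - Ψ v₀ := by
      rw [hmul _ hV1 _ (V.inv_mem hv₀), hconjt v₀ hv₀, hΨinv v₀ hv₀]
      ring
    have e2 : Ψ (t * v₀ * t⁻¹ * v₀⁻¹) = 0 := hc1.2
    rw [e1] at e2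
    have h3 : (lam - 1) * Ψ v₀ = 0 := by linear_combination e2
    rcases mul_eq_zero.1 h3 with h | h
    · exact hlam1 (by linear_combination h)
    · exact hΨv₀ h
  obtain ⟨v, hvball, hvV, hΨv⟩ := hcase
  -- counting
  have hcard2 : ∀ m : ℕ, 2 ≤ Nat.card (ball S (m + 1)) := by
    intro m
    haveI : Finite (ball S (m + 1)) := (ball_finite S (m + 1)).to_subtype
    have hu1 : u₀ ≠ 1 := fun h => hu₀V (h ▸ V.one_mem)
    let f : Bool → ball S (m + 1) := fun b =>
      if b then ⟨u₀, ball_mono S (by omega) (mem_ball_of_mem S hu₀S)⟩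
      else ⟨1, one_mem_ball S _⟩
    have hfinj : Function.Injective f := by
      intro b b' hbb
      cases b <;> cases b' <;> simp_all [f, Subtype.ext_iff]
    have := Nat.card_le_card_of_injective f hfinj
    simpa using this
  have hcardpow : ∀ m k : ℕ, 5 * m ≤ k → 2 ^ m ≤ Nat.card (ball S k) := by
    intro m k h5
    haveI : Finite (ball S k) := (ball_finite S k).to_subtype
    have hmem : ∀ f : Fin m → Bool, wprod s v (List.ofFn f) ∈ ball S k := by
      intro f
      have hall : ∀ x ∈ (List.ofFn f).map (fun b => (if b then v else 1) * s), x ∈ ball S 5 := by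
        intro x hx
        simp only [List.mem_map] at hx
        obtain ⟨b, -, rfl⟩ := hx
        cases b
        · simpa using ball_mono S (by norm_num) hsball
        · simpa using mul_mem_ball S hvball hsball
      have h1 := prod_mem_ball S hall
      rw [List.length_map, List.length_ofFn] at h1
      exact ball_mono S (le_trans h5 (le_refl k)) h1
    let F : (Fin m → Bool) → ball S k := fun f => ⟨wprod s v (List.ofFn f), hmem f⟩
    have hFinj : Function.Injective F := fun f f' h =>
      wprod_injective V Ψ s v μ hvV hmul hsconj hμ hΨv m (congrArg Subtype.val h)
    have hle := Nat.card_le_card_of_injective F hFinj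
    calc (2:ℕ) ^ m = Nat.card (Fin m → Bool) := by
          simp [Nat.card_eq_fintype_card]
      _ ≤ _ := hle
  -- per-term numeric bound
  have hterm : ∀ m : ℕ,
      (2:ℝ) ^ ((10:ℝ)⁻¹) ≤ (Nat.card (ball S (m + 1)) : ℝ) ^ (((m : ℝ) + 1)⁻¹) := by
    intro m
    have hNpos : (0:ℝ) < (m:ℝ) + 1 := by positivity
    by_cases hN : m + 1 ≤ 9
    · calc (2:ℝ) ^ ((10:ℝ)⁻¹) ≤ (2:ℝ) ^ (((m:ℝ) + 1)⁻¹) := by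
            apply (Real.rpow_le_rpow_left_iff (by norm_num)).2
            apply inv_anti₀ hNpos
            exact_mod_cast (by omega : m + 1 ≤ 10)
        _ ≤ _ := by
            apply Real.rpow_le_rpow (by norm_num) ?_ (by positivity)
            exact_mod_cast hcard2 m
    · push_neg at hN
      set N := m + 1 with hNdef
      have h5 : 5 * (N / 5) ≤ N := by omega
      have h10 : N ≤ 10 * (N / 5) := by omega
      have hpow := hcardpow (N / 5) N h5
      have hcast : ((m : ℝ) + 1) = (N : ℝ) := by push_cast [hNdef]; ring
      rw [hcast]
      calc (2:ℝ) ^ ((10:ℝ)⁻¹) ≤ (2:ℝ) ^ ((((N / 5 : ℕ) : ℝ)) * ((N:ℝ))⁻¹) := by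
            apply (Real.rpow_le_rpow_left_iff (by norm_num)).2
            have hNR : (0:ℝ) < (N:ℝ) := by exact_mod_cast (by omega : 0 < N)
            rw [inv_eq_one_div, ← div_eq_mul_inv, div_le_div_iff₀ (by norm_num) hNR]
            have hh : 1 * N ≤ (N / 5) * 10 := by omega
            exact_mod_cast hh
        _ = ((2:ℝ) ^ ((N / 5 : ℕ))) ^ ((N:ℝ))⁻¹ := by
            rw [← Real.rpow_natCast 2 (N / 5), ← Real.rpow_mul (by norm_num)]
        _ ≤ _ := by
            apply Real.rpow_le_rpow (by positivity) ?_ (by positivity)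
            exact_mod_cast hpow
  exact le_ciInf hterm


open Matrix in
/-- Lemma "two": a f.g. group with normal `ℤ^r` and cyclic quotient,
where the conjugation matrix has an eigenvalue of modulus at least 2, has uniform
exponential growth. -/
theorem uniform_growth_abelian_by_cyclic_eigenvalue {G : Type*} [Group G]
    (hfg : Group.FG G) (r : ℕ) (V : Subgroup G) [hV : V.Normal]
    (e : ↥V ≃* Multiplicative (Fin r → ℤ))
    (t : G) (hcyc : ∀ x : G ⧸ V, x ∈ Subgroup.zpowers ((t : G ⧸ V)))
    (A : GL (Fin r) ℤ)
    (hconj : ∀ (v : G) (hv : v ∈ V),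
      Multiplicative.toAdd (e ⟨t * v * t⁻¹, hV.conj_mem v hv t⟩) =
        (A : Matrix (Fin r) (Fin r) ℤ).mulVec (Multiplicative.toAdd (e ⟨v, hv⟩)))
    (hEig : ∃ lam : ℂ, 2 ≤ ‖lam‖ ∧
      ∃ x : Fin r → ℂ, x ≠ 0 ∧
        ((A : Matrix (Fin r) (Fin r) ℤ).map ((↑·) : ℤ → ℂ)).mulVec x = lam • x) :
    UniformExponentialGrowth G := by
  classical
  obtain ⟨lam, hlam, x, hx0, hxeig⟩ := hEig
  set B : Matrix (Fin r) (Fin r) ℂ := (A : Matrix (Fin r) (Fin r) ℤ).map ((↑·) : ℤ → ℂ) with hB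
  have hlam0 : lam ≠ 0 := by
    intro h; rw [h] at hlam; norm_num at hlam
  -- left eigenvector
  have hdet : (B - lam • 1).det = 0 := by
    rw [← Matrix.exists_mulVec_eq_zero_iff]
    refine ⟨x, hx0, ?_⟩
    rw [Matrix.sub_mulVec, Matrix.smul_mulVec, Matrix.one_mulVec, hxeig, sub_self]
  have hdetT : ((B - lam • 1).transpose).det = 0 := by
    rw [Matrix.det_transpose]; exact hdet
  obtain ⟨y, hy0, hyeig⟩ := (Matrix.exists_mulVec_eq_zero_iff).2 hdetT
  have hvecMul : Matrix.vecMul y B = lam • y := by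
    rw [Matrix.transpose_sub, Matrix.transpose_smul, Matrix.transpose_one,
      Matrix.sub_mulVec, Matrix.smul_mulVec, Matrix.one_mulVec, sub_eq_zero] at hyeig
    rw [← Matrix.mulVec_transpose]
    exact hyeig
  -- the functional
  set zc : (Fin r → ℤ) → (Fin r → ℂ) := fun z i => ((z i : ℤ) : ℂ) with hzc
  set Ψ : G → ℂ := fun g => if h : g ∈ V then
      dotProduct y (zc (Multiplicative.toAdd (e ⟨g, h⟩))) else 0 with hΨ
  have hΨdef : ∀ (g : G) (h : g ∈ V),
      Ψ g = dotProduct y (zc (Multiplicative.toAdd (e ⟨g, h⟩))) := by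
    intro g h
    simp only [hΨ]
    rw [dif_pos h]
  have hzc_add : ∀ z z', zc (z + z') = zc z + zc z' := by
    intro z z'; funext i
    simp only [hzc, Pi.add_apply]
    push_cast
    rfl
  have hmul : ∀ a ∈ V, ∀ b ∈ V, Ψ (a * b) = Ψ a + Ψ b := by
    intro a ha b hb
    rw [hΨdef a ha, hΨdef b hb, hΨdef (a * b) (V.mul_mem ha hb)]
    have h1 : (⟨a * b, V.mul_mem ha hb⟩ : V) = (⟨a, ha⟩ : V) * (⟨b, hb⟩ : V) := rfl
    rw [h1, _root_.map_mul, toAdd_mul, hzc_add, dotProduct_add]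
  have hVab : ∀ a ∈ V, ∀ b ∈ V, a * b = b * a := by
    intro a ha b hb
    have h1 : (⟨a, ha⟩ : V) * (⟨b, hb⟩ : V) = (⟨b, hb⟩ : V) * (⟨a, ha⟩ : V) :=
      e.injective (by rw [_root_.map_mul, _root_.map_mul, mul_comm])
    exact congrArg Subtype.val h1
  have hcommV : ∀ u u' : G, u⁻¹ * u'⁻¹ * u * u' ∈ V := by
    intro u u'
    obtain ⟨a, ha⟩ := Subgroup.mem_zpowers_iff.1 (hcyc (u : G ⧸ V))
    obtain ⟨b, hb⟩ := Subgroup.mem_zpowers_iff.1 (hcyc (u' : G ⧸ V))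
    have h1 : ((u⁻¹ * u'⁻¹ * u * u' : G) : G ⧸ V) = 1 := by
      have h2 : ((u⁻¹ * u'⁻¹ * u * u' : G) : G ⧸ V) =
          ((u : G ⧸ V))⁻¹ * ((u' : G ⧸ V))⁻¹ * (u : G ⧸ V) * (u' : G ⧸ V) := by
        simp
      rw [h2, ← ha, ← hb]
      group
    exact (QuotientGroup.eq_one_iff _).1 h1
  have hzcB : ∀ z : Fin r → ℤ,
      zc ((A : Matrix (Fin r) (Fin r) ℤ).mulVec z) = B.mulVec (zc z) := by
    intro z; funext i
    simp only [hzc, hB, Matrix.mulVec, dotProduct, Matrix.map_apply]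
    push_cast
    rfl
  have hconjt : ∀ w ∈ V, Ψ (t * w * t⁻¹) = lam * Ψ w := by
    intro w hw
    rw [hΨdef w hw, hΨdef _ (hV.conj_mem w hw t), hconj w hw, hzcB,
      Matrix.dotProduct_mulVec, hvecMul, smul_dotProduct, smul_eq_mul]
  have hinvt : ∀ w ∈ V, Ψ (t⁻¹ * w * t) = lam⁻¹ * Ψ w := by
    intro w hw
    have hw' : t⁻¹ * w * t ∈ V := by
      have := hV.conj_mem w hw t⁻¹
      simpa using this
    have h1 := hconjt _ hw'
    have h2 : t * (t⁻¹ * w * t) * t⁻¹ = w := by group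
    rw [h2] at h1
    rw [h1, ← mul_assoc, inv_mul_cancel₀ hlam0, one_mul]
  have hconjtz : ∀ (k : ℤ), ∀ w ∈ V, Ψ (t ^ k * w * (t ^ k)⁻¹) = lam ^ k * Ψ w := by
    intro k
    induction k using Int.induction_on with
    | zero => intro w hw; simp
    | succ k ih =>
      intro w hw
      have h1 : t ^ ((k : ℤ) + 1) * w * (t ^ ((k : ℤ) + 1))⁻¹ =
          t * (t ^ (k : ℤ) * w * (t ^ (k : ℤ))⁻¹) * t⁻¹ := by
        rw [_root_.zpow_add_one]
        group
      have hwin : t ^ (k : ℤ) * w * (t ^ (k : ℤ))⁻¹ ∈ V := hV.conj_mem w hw _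
      rw [h1, hconjt _ hwin, ih w hw, zpow_add_one₀ hlam0]
      ring
    | pred k ih =>
      intro w hw
      have h1 : t ^ (-(k : ℤ) - 1) * w * (t ^ (-(k : ℤ) - 1))⁻¹ =
          t⁻¹ * (t ^ (-(k : ℤ)) * w * (t ^ (-(k : ℤ)))⁻¹) * t := by
        rw [_root_.zpow_sub_one]
        group
      have hwin : t ^ (-(k : ℤ)) * w * (t ^ (-(k : ℤ)))⁻¹ ∈ V := hV.conj_mem w hw _
      rw [h1, hinvt _ hwin, ih w hw, zpow_sub_one₀ hlam0]
      ring
  have hconjg : ∀ g : G, ∃ d : ℤ, (g ∉ V → d ≠ 0) ∧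
      ∀ w ∈ V, Ψ (g * w * g⁻¹) = lam ^ d * Ψ w := by
    intro g
    obtain ⟨d, hd⟩ := Subgroup.mem_zpowers_iff.1 (hcyc (g : G ⧸ V))
    refine ⟨d, ?_, ?_⟩
    · intro hgV hd0
      rw [hd0] at hd
      simp only [zpow_zero] at hd
      exact hgV ((QuotientGroup.eq_one_iff g).1 hd.symm)
    · intro w hw
      have hmem : (t ^ d)⁻¹ * g ∈ V := by
        have h3 : ((t ^ d : G) : G ⧸ V) = (g : G ⧸ V) := by
          rw [← hd]; simp
        exact (QuotientGroup.eq).1 h3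
      have h1 : ((t ^ d)⁻¹ * g) * w * ((t ^ d)⁻¹ * g)⁻¹ = w := by
        rw [hVab _ hmem w hw]; group
      have hgw : g * w * g⁻¹ = t ^ d * w * (t ^ d)⁻¹ := by
        calc g * w * g⁻¹ = t ^ d * (((t ^ d)⁻¹ * g) * w * ((t ^ d)⁻¹ * g)⁻¹) * (t ^ d)⁻¹ := by
              group
          _ = t ^ d * w * (t ^ d)⁻¹ := by rw [h1]
      rw [hgw]
      exact hconjtz d w hw
  -- nonzero value
  obtain ⟨i, hyi⟩ : ∃ i, y i ≠ 0 := Function.ne_iff.1 hy0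
  set v₀ : G := ((e.symm (Multiplicative.ofAdd (Pi.single i 1))) : G) with hv₀def
  have hv₀V : v₀ ∈ V := SetLike.coe_mem _
  have hΨv₀ : Ψ v₀ ≠ 0 := by
    rw [hΨdef v₀ hv₀V]
    have h1 : (⟨v₀, hv₀V⟩ : V) = e.symm (Multiplicative.ofAdd (Pi.single i 1)) :=
      Subtype.ext rfl
    rw [h1, MulEquiv.apply_symm_apply]
    have h2 : dotProduct y (zc (Multiplicative.toAdd
        (Multiplicative.ofAdd (Pi.single i (1 : ℤ))))) = y i := by
      simp only [toAdd_ofAdd, hzc, dotProduct, Pi.single_apply]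
      rw [Finset.sum_eq_single i]
      · simp
      · intro j _ hj
        simp [hj]
      · simp
    rw [h2]
    exact hyi
  -- conclusion
  have hbound : ∀ S : Finset G, Subgroup.closure (S : Set G) = ⊤ →
      (2:ℝ) ^ ((10:ℝ)⁻¹) ≤ growthRate S := fun S hS =>
    growth_bound V Ψ lam t hlam hmul hconjg hconjt hcommV hVab v₀ hv₀V hΨv₀ S hS
  have hne : {r : ℝ | ∃ S : Finset G, Subgroup.closure (S : Set G) = ⊤ ∧
      r = growthRate S}.Nonempty := by
    obtain ⟨S, hS⟩ := (Group.FG.out : ∃ S : Finset G, Subgroup.closure (S : Set G) = ⊤)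
    exact ⟨growthRate S, S, hS, rfl⟩
  have hlow : (1:ℝ) < (2:ℝ) ^ ((10:ℝ)⁻¹) :=
    (Real.one_lt_rpow_iff_of_pos (by norm_num)).2 (Or.inl ⟨by norm_num, by norm_num⟩)
  refine lt_of_lt_of_le hlow ?_
  exact le_csInf hne (by rintro ρ ⟨S, hS, rfl⟩; exact hbound S hS)
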